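/- If (X,d) is a complete and locally compact metric space, then d_0 = d̄ (the chain metric coincides with the induced length metric), and moreover (X,d_0) is a geodesic space: for all p,q with d_0(p,q) < ∞ there is a path γ: [0,1] → X from p to q with d(γ(t),γ(t')) ≤ d_0(p,q)·|t−t'| and L(γ) = d_0(p,q). -/

import Mathlib

open Filter Set
open scoped ENNReal

variable {X : Type*}

/-- The length of the chain `x 0, x 1, …, x n` with respect to the distance `ρ`. -/
noncomputable def chainLengthOf (ρ : X → X → ℝ≥0∞) (x : ℕ → X) (n : ℕ) : ℝ≥0∞ :=
  ∑ k ∈ Finset.range n, ρ (x k) (x (k + 1))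

/-- `x 0, …, x n` is an `ε`-chain from `p` to `q` with respect to `ρ`. -/
def IsChainOf (ρ : X → X → ℝ≥0∞) (ε : ℝ≥0∞) (p q : X) (x : ℕ → X) (n : ℕ) : Prop :=
  x 0 = p ∧ x n = q ∧ ∀ k < n, ρ (x k) (x (k + 1)) ≤ ε

/-- `d_ε`: the infimum of lengths of `ε`-chains joining `p` to `q`. -/
noncomputable def chainDistOf (ρ : X → X → ℝ≥0∞) (ε : ℝ≥0∞) (p q : X) : ℝ≥0∞ :=
  ⨅ (n : ℕ) (x : ℕ → X) (_ : IsChainOf ρ ε p q x n), chainLengthOf ρ x n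

/-- `d_0 = sup_{ε > 0} d_ε`. -/
noncomputable def chainMetricOf (ρ : X → X → ℝ≥0∞) (p q : X) : ℝ≥0∞ :=
  ⨆ (ε : ℝ≥0∞) (_ : 0 < ε), chainDistOf ρ ε p q

/-- `d_ε` for a metric space, with `ρ = edist`. -/
noncomputable def chainDist [PseudoEMetricSpace X] (ε : ℝ≥0∞) (p q : X) : ℝ≥0∞ :=
  chainDistOf (fun a b => edist a b) ε p q

/-- `d_0` for a metric space, with `ρ = edist`. -/
noncomputable def chainMetric [PseudoEMetricSpace X] (p q : X) : ℝ≥0∞ :=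
  chainMetricOf (fun a b => edist a b) p q

/-- The length of a path `γ : [0,1] → X` with respect to `ρ`:
the supremum over partitions `0 = t 0 ≤ t 1 ≤ … ≤ t n = 1` of the partition sums. -/
noncomputable def pathLengthOf (ρ : X → X → ℝ≥0∞) (γ : ℝ → X) : ℝ≥0∞ :=
  ⨆ (n : ℕ) (t : ℕ → ℝ) (_ : t 0 = 0 ∧ t n = 1 ∧ Monotone t),
    ∑ k ∈ Finset.range n, ρ (γ (t k)) (γ (t (k + 1)))

noncomputable def pathLength [PseudoEMetricSpace X] (γ : ℝ → X) : ℝ≥0∞ :=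
  pathLengthOf (fun a b => edist a b) γ

/-- Continuity of a path `γ` on `[0,1]` with respect to the distance `ρ`. -/
def ContinuousWrt (ρ : X → X → ℝ≥0∞) (γ : ℝ → X) : Prop :=
  ∀ t ∈ Icc (0 : ℝ) 1,
    Tendsto (fun s => ρ (γ s) (γ t)) (nhdsWithin t (Icc (0 : ℝ) 1)) (nhds 0)

/-- The induced length metric with respect to `ρ`: the infimum of `ρ`-lengths of
`ρ`-continuous paths joining `p` to `q`. -/
noncomputable def lengthMetricOf (ρ : X → X → ℝ≥0∞) (p q : X) : ℝ≥0∞ :=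
  ⨅ (γ : ℝ → X) (_ : ContinuousWrt ρ γ ∧ γ 0 = p ∧ γ 1 = q), pathLengthOf ρ γ

/-- The induced length metric `d̄` of a metric space. -/
noncomputable def lengthMetric [PseudoEMetricSpace X] (p q : X) : ℝ≥0∞ :=
  lengthMetricOf (fun a b => edist a b) p q

/- ## basic lemmas -/
section Basic
variable [MetricSpace X] {p q x y : X} {ε ε' : ℝ≥0∞}

lemma chainLength_mono (c : ℕ → X) : Monotone (chainLengthOf (fun a b : X => edist a b) c) :=
  fun _ _ h => Finset.sum_le_sum_of_subset (Finset.range_subset_range.2 h)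

lemma edist_le_sum_Ico (c : ℕ → X) {j k : ℕ} (h : j ≤ k) :
    edist (c j) (c k) ≤ ∑ i ∈ Finset.Ico j k, edist (c i) (c (i + 1)) := by
  induction k, h using Nat.le_induction with
  | base => simp
  | succ k hk ih =>
    calc edist (c j) (c (k + 1)) ≤ edist (c j) (c k) + edist (c k) (c (k + 1)) :=
          edist_triangle _ _ _
    _ ≤ (∑ i ∈ Finset.Ico j k, edist (c i) (c (i + 1))) + edist (c k) (c (k + 1)) := by
          exact add_le_add_left ih _
    _ = _ := by rw [Finset.sum_Ico_succ_top hk]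

lemma sum_Ico_eq_chainLength_sub (c : ℕ → X) {j k : ℕ} (h : j ≤ k) :
    chainLengthOf (fun a b : X => edist a b) c j
      + ∑ i ∈ Finset.Ico j k, edist (c i) (c (i + 1))
      = chainLengthOf (fun a b : X => edist a b) c k := by
  exact Finset.sum_range_add_sum_Ico _ h

lemma edist_le_chainLength {c : ℕ → X} {n : ℕ} (h : IsChainOf (fun a b : X => edist a b) ε p q c n) :
    edist p q ≤ chainLengthOf (fun a b : X => edist a b) c n := by
  have h2 := edist_le_sum_Ico c (Nat.zero_le n)
  rw [h.1, h.2.1] at h2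
  rw [chainLengthOf, Finset.range_eq_Ico]
  exact h2

lemma le_chainDist : edist p q ≤ chainDist ε p q := by
  refine le_iInf fun n => le_iInf fun c => le_iInf fun hc => edist_le_chainLength hc

lemma chainDist_le_of_chain {c : ℕ → X} {n : ℕ}
    (h : IsChainOf (fun a b : X => edist a b) ε p q c n) :
    chainDist ε p q ≤ chainLengthOf (fun a b : X => edist a b) c n := by
  exact iInf_le_of_le n (iInf_le_of_le c (iInf_le_of_le h le_rfl))

lemma chainDist_anti (h : ε ≤ ε') : chainDist ε' p q ≤ chainDist ε p q := by
  refine le_iInf fun n => le_iInf fun c => le_iInf fun hc => ?_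
  exact chainDist_le_of_chain ⟨hc.1, hc.2.1, fun k hk => (hc.2.2 k hk).trans h⟩

lemma chainDist_le_chainMetric (hε : 0 < ε) : chainDist ε p q ≤ chainMetric p q := by
  exact le_iSup₂ (f := fun (ε : ℝ≥0∞) (_ : 0 < ε) => chainDist ε p q) ε hε

lemma chainMetric_le {c : ℝ≥0∞} (h : ∀ ε, 0 < ε → chainDist ε p q ≤ c) :
    chainMetric p q ≤ c := iSup₂_le h

lemma exists_chain_of_chainDist_lt {c : ℝ≥0∞} (h : chainDist ε p q < c) :
    ∃ n cc, IsChainOf (fun a b : X => edist a b) ε p q cc n ∧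
      chainLengthOf (fun a b : X => edist a b) cc n < c := by
  simp only [chainDist, chainDistOf, iInf_lt_iff] at h
  obtain ⟨n, cc, hc, hl⟩ := h
  exact ⟨n, cc, hc, hl⟩

lemma chainDist_add_one_step (hxy : edist y x ≤ ε) :
    chainDist ε p x ≤ chainDist ε p y + edist y x := by
  conv_rhs => rw [chainDist, chainDistOf]
  rw [ENNReal.iInf_add]; refine le_iInf fun n => ?_
  rw [ENNReal.iInf_add]; refine le_iInf fun c => ?_
  rw [ENNReal.iInf_add]; refine le_iInf fun hc => ?_
  set c' : ℕ → X := fun k => if k ≤ n then c k else x with hc'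
  have hagree : ∀ k ≤ n, c' k = c k := fun k hk => by simp [hc', hk]
  refine iInf_le_of_le (n+1) (iInf_le_of_le c' (iInf_le_of_le ?_ ?_))
  · refine ⟨?_, ?_, ?_⟩
    · rw [hagree 0 (Nat.zero_le n), hc.1]
    · simp [hc']
    · intro k hk
      rcases Nat.lt_succ_iff_lt_or_eq.1 hk with hk' | rfl
      · rw [hagree k hk'.le, hagree (k+1) hk']
        exact hc.2.2 k hk'
      · rw [hagree k le_rfl, hc.2.1]
        simpa [hc'] using hxy
  · have : chainLengthOf (fun a b : X => edist a b) c' (n+1)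
        = chainLengthOf (fun a b : X => edist a b) c n + edist y x := by
      rw [chainLengthOf, Finset.sum_range_succ]
      congr 1
      · exact Finset.sum_congr rfl fun k hk => by
          rw [hagree k (Finset.mem_range.1 hk).le, hagree (k+1) (Finset.mem_range.1 hk)]
      · rw [hagree n le_rfl, hc.2.1]; simp [hc']
    rw [this]
end Basic

section Main
variable [MetricSpace X] {p q x y : X} {ε ε' : ℝ≥0∞}

lemma exists_real_le_ennreal (hε : 0 < ε) : ∃ d : ℝ, 0 < d ∧ ENNReal.ofReal d ≤ ε := by
  rcases eq_or_ne ε ⊤ with rfl | htop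
  · exact ⟨1, one_pos, le_top⟩
  · refine ⟨ε.toReal, ?_, by rw [ENNReal.ofReal_toReal htop]⟩
    exact ENNReal.toReal_pos hε.ne' htop

lemma chainLength_zero (c : ℕ → X) : chainLengthOf (fun a b : X => edist a b) c 0 = 0 := by
  simp [chainLengthOf]

lemma isClosed_chainDist_le (hε : 0 < ε) (p : X) (r : ℝ≥0∞) :
    IsClosed {x : X | chainDist ε p x ≤ r} := by
  rw [← isOpen_compl_iff]
  rw [isOpen_iff_mem_nhds]
  intro x hx
  simp only [mem_compl_iff, mem_setOf_eq, not_le] at hx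
  obtain ⟨d, hd, hdε⟩ := exists_real_le_ennreal hε
  rcases eq_or_ne r ⊤ with rfl | hrtop
  · exact absurd hx (by simp)
  obtain ⟨d', hd', hd'lt⟩ : ∃ d' : ℝ, 0 < d' ∧ r + ENNReal.ofReal d' < chainDist ε p x := by
    obtain ⟨m, hm1, hm2⟩ := exists_between hx
    refine ⟨(m - r).toReal, ?_, ?_⟩
    · refine ENNReal.toReal_pos ?_ ?_
      · simpa [tsub_eq_zero_iff_le] using hm1.not_ge
      · exact (tsub_le_self.trans_lt (lt_top_iff_ne_top.2 hm2.ne_top)).ne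
    · calc r + ENNReal.ofReal (m - r).toReal = r + (m - r) := by
            rw [ENNReal.ofReal_toReal]
            exact (tsub_le_self.trans_lt (lt_top_iff_ne_top.2 hm2.ne_top)).ne
      _ = m := by rw [add_tsub_cancel_of_le hm1.le]
      _ < chainDist ε p x := hm2
  refine Filter.mem_of_superset (Metric.ball_mem_nhds x (lt_min hd hd')) ?_
  intro y hy
  simp only [mem_compl_iff, mem_setOf_eq, not_le]
  by_contra hcon
  push_neg at hcon
  have hyx : edist y x ≤ min (ENNReal.ofReal d) (ENNReal.ofReal d') := by
    rw [Metric.mem_ball] at hy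
    rw [edist_dist]
    exact le_min (ENNReal.ofReal_le_ofReal (hy.le.trans (min_le_left _ _)))
      (ENNReal.ofReal_le_ofReal (hy.le.trans (min_le_right _ _)))
  have h1 : chainDist ε p x ≤ chainDist ε p y + edist y x :=
    chainDist_add_one_step (hyx.trans ((min_le_left _ _).trans hdε))
  have h2 : chainDist ε p x ≤ r + ENNReal.ofReal d' :=
    h1.trans (add_le_add hcon (hyx.trans (min_le_right _ _)))
  exact absurd (h2.trans_lt hd'lt) (lt_irrefl _)

lemma prefix_chain {c : ℕ → X} {n : ℕ} (hc : IsChainOf (fun a b : X => edist a b) ε p x c n)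
    {j : ℕ} (hj : j ≤ n) : IsChainOf (fun a b : X => edist a b) ε p (c j) c j :=
  ⟨hc.1, rfl, fun k hk => hc.2.2 k (hk.trans_le hj)⟩

lemma truncation (hε : ε ≠ ⊤) {c : ℕ → X} {n : ℕ}
    (hc : IsChainOf (fun a b : X => edist a b) ε p x c n) (r : ℝ≥0∞) :
    ∃ y, chainDist ε p y ≤ r ∧
      edist y x ≤ chainLengthOf (fun a b : X => edist a b) c n + ε - r := by
  classical
  set L := chainLengthOf (fun a b : X => edist a b) c n with hL
  rcases le_total L r with hLr | hrL
  · refine ⟨x, (chainDist_le_of_chain hc).trans hLr, by simp⟩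
  · set P : ℕ → Prop := fun j => chainLengthOf (fun a b : X => edist a b) c j ≤ r with hP
    have hP0 : P 0 := by simp [hP, chainLength_zero]
    set j := Nat.findGreatest P n with hj
    have hjn : j ≤ n := Nat.findGreatest_le n
    have hjspec : P j := Nat.findGreatest_spec (Nat.zero_le n) hP0
    refine ⟨c j, (chainDist_le_of_chain (prefix_chain hc hjn)).trans hjspec, ?_⟩
    have hsplit := sum_Ico_eq_chainLength_sub c hjn
    have hedist : edist (c j) x ≤ ∑ i ∈ Finset.Ico j n, edist (c i) (c (i + 1)) := by
      rw [← hc.2.1]; exact edist_le_sum_Ico c hjn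
    have hLtop : L ≠ ⊤ := by
      have : L ≤ n • ε := by
        rw [hL, chainLengthOf]
        have := Finset.sum_le_card_nsmul (Finset.range n) (fun k => edist (c k) (c (k+1))) ε
          (fun k hk => hc.2.2 k (Finset.mem_range.1 hk))
        simpa using this
      exact (this.trans_lt (by
        simpa [nsmul_eq_mul] using ENNReal.mul_lt_top (by simp) (lt_top_iff_ne_top.2 hε))).ne
    have hrtop : r ≠ ⊤ := fun h => hLtop (top_le_iff.1 (h ▸ hrL))
    refine ENNReal.le_sub_of_add_le_right hrtop ?_
    rcases eq_or_lt_of_le hjn with heq | hjlt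
    · have hz : edist (c j) x = 0 := by rw [heq, hc.2.1, edist_self]
      rw [hz, zero_add]
      exact hrL.trans le_self_add
    · have hnot : ¬ P (j + 1) := Nat.findGreatest_is_greatest (Nat.lt_succ_self j) hjlt
      have hstep : chainLengthOf (fun a b : X => edist a b) c (j+1)
          ≤ chainLengthOf (fun a b : X => edist a b) c j + ε := by
        simp only [chainLengthOf, Finset.sum_range_succ]
        gcongr
        exact hc.2.2 j hjlt
      have hrlt : r ≤ chainLengthOf (fun a b : X => edist a b) c j + ε :=
        ((not_le.1 hnot).le).trans hstep
      calc edist (c j) x + r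
          ≤ (∑ i ∈ Finset.Ico j n, edist (c i) (c (i + 1)))
            + (chainLengthOf (fun a b : X => edist a b) c j + ε) := add_le_add hedist hrlt
      _ = (chainLengthOf (fun a b : X => edist a b) c j
            + ∑ i ∈ Finset.Ico j n, edist (c i) (c (i + 1))) + ε := by ring
      _ = L + ε := by rw [hsplit]
end Main

section Easy
variable [MetricSpace X] {p q : X}

lemma continuousOn_of_continuousWrt {γ : ℝ → X}
    (h : ContinuousWrt (fun a b : X => edist a b) γ) :
    ContinuousOn γ (Icc (0:ℝ) 1) := by
  intro t ht
  rw [ContinuousWithinAt, EMetric.tendsto_nhds]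
  intro ε hε
  exact (h t ht).eventually_lt_const hε

lemma chainMetric_le_pathLength {γ : ℝ → X}
    (hcont : ContinuousWrt (fun a b : X => edist a b) γ) (h0 : γ 0 = p) (h1 : γ 1 = q) :
    chainMetric p q ≤ pathLengthOf (fun a b : X => edist a b) γ := by
  refine chainMetric_le fun ε hε => ?_
  have hc : ContinuousOn γ (Icc 0 1) := continuousOn_of_continuousWrt hcont
  have hu : UniformContinuousOn γ (Icc 0 1) :=
    isCompact_Icc.uniformContinuousOn_of_continuous hc
  obtain ⟨d, hd, hdε⟩ := exists_real_le_ennreal hε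
  rw [Metric.uniformContinuousOn_iff] at hu
  obtain ⟨δ, hδ, himp⟩ := hu d hd
  obtain ⟨n, hn⟩ := exists_nat_gt (1/δ)
  have hn0 : 0 < n := by
    rcases Nat.eq_zero_or_pos n with rfl | h
    · exfalso
      simp only [Nat.cast_zero] at hn
      exact absurd hn (not_lt.2 (le_of_lt (by positivity)))
    · exact h
  have hnR : (0:ℝ) < n := Nat.cast_pos.2 hn0
  have hstepδ : 1/(n:ℝ) < δ := by
    rw [div_lt_iff₀ hnR]
    calc (1:ℝ) = (1/δ) * δ := by field_simp
    _ < n * δ := mul_lt_mul_of_pos_right hn hδ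
    _ = δ * n := mul_comm _ _
  set t : ℕ → ℝ := fun k => (k:ℝ)/n with htdef
  have htmem : ∀ k ≤ n, t k ∈ Icc (0:ℝ) 1 := by
    intro k hk
    constructor
    · positivity
    · rw [div_le_one hnR]
      exact_mod_cast hk
  have hmono : Monotone t := fun a b hab =>
    (div_le_div_iff_of_pos_right hnR).2 (Nat.cast_le.2 hab)
  have ht0 : t 0 = 0 := by simp [htdef]
  have htn : t n = 1 := by
    simp only [htdef]
    exact div_self hnR.ne'
  have hchain : IsChainOf (fun a b : X => edist a b) ε p q (fun k => γ (t k)) n := by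
    refine ⟨by simp only []; rw [ht0, h0], by simp only []; rw [htn, h1], fun k hk => ?_⟩
    have hdist : dist (t k) (t (k+1)) = 1/(n:ℝ) := by
      rw [Real.dist_eq, htdef]
      simp only
      rw [abs_sub_comm]
      have : ((k+1:ℕ):ℝ)/n - (k:ℝ)/n = 1/n := by
        push_cast
        field_simp
        ring
      rw [this, abs_of_pos (by positivity)]
    have := himp (t k) (htmem k hk.le) (t (k+1)) (htmem (k+1) hk)
      (by rw [hdist]; exact hstepδ)
    calc edist (γ (t k)) (γ (t (k+1))) = ENNReal.ofReal (dist (γ (t k)) (γ (t (k+1)))) :=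
          edist_dist _ _
    _ ≤ ENNReal.ofReal d := ENNReal.ofReal_le_ofReal this.le
    _ ≤ ε := hdε
  refine (chainDist_le_of_chain hchain).trans ?_
  rw [pathLengthOf]
  exact le_iSup_of_le n (le_iSup_of_le t (le_iSup_of_le ⟨ht0, htn, hmono⟩ le_rfl))

lemma chainMetric_le_lengthMetric : chainMetric p q ≤ lengthMetric p q := by
  refine le_iInf fun γ => le_iInf fun hγ => ?_
  exact chainMetric_le_pathLength hγ.1 hγ.2.1 hγ.2.2
end Easy

section Compactness
variable [MetricSpace X] {p q : X}

lemma exists_compact_absorbing [LocallyCompactSpace X] {K : Set X} (hK : IsCompact K) :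
    ∃ (L : Set X) (δ : ℝ), IsCompact L ∧ 0 < δ ∧
      ∀ x y : X, y ∈ K → dist x y ≤ δ → x ∈ L := by
  obtain ⟨L, hL, hKL⟩ := exists_compact_superset hK
  obtain ⟨δ, hδ, hth⟩ := hK.exists_cthickening_subset_open isOpen_interior hKL
  refine ⟨L, δ, hL, hδ, fun x y hy hdist => ?_⟩
  have hx : x ∈ Metric.cthickening δ K := Metric.mem_cthickening_of_dist_le x y δ K hy hdist
  exact interior_subset (hth hx)

lemma compact_chainDist_ball [CompleteSpace X] [LocallyCompactSpace X] (p : X) (R : ℝ) :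
    ∃ ε : ℝ≥0∞, 0 < ε ∧ ε ≠ ⊤ ∧
      IsCompact {x : X | chainDist ε p x ≤ ENNReal.ofReal R} := by
  set P : ℝ → Prop := fun r => ∃ ε : ℝ≥0∞, 0 < ε ∧ ε ≠ ⊤ ∧
    IsCompact {x : X | chainDist ε p x ≤ ENNReal.ofReal r} with hPdef
  have hshrink : ∀ (r : ℝ) (ε ε' : ℝ≥0∞), 0 < ε' → ε' ≤ ε →
      IsCompact {x : X | chainDist ε p x ≤ ENNReal.ofReal r} →
      IsCompact {x : X | chainDist ε' p x ≤ ENNReal.ofReal r} := by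
    intro r ε ε' hε' hle hcomp
    refine hcomp.of_isClosed_subset (isClosed_chainDist_le hε' p _) ?_
    intro x hx
    exact le_trans (chainDist_anti hle) hx
  have hdown : ∀ r r' : ℝ, r' ≤ r → P r → P r' := by
    intro r r' hle ⟨ε, hε, hεtop, hcomp⟩
    refine ⟨ε, hε, hεtop, hcomp.of_isClosed_subset (isClosed_chainDist_le hε p _) ?_⟩
    intro x hx
    exact le_trans hx (ENNReal.ofReal_le_ofReal hle)
  have hbase : ∃ a : ℝ, 0 < a ∧ P a := by
    obtain ⟨a, ha, hcomp⟩ := Metric.exists_isCompact_closedBall p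
    refine ⟨a, ha, 1, one_pos, ENNReal.one_ne_top, hcomp.of_isClosed_subset
      (isClosed_chainDist_le one_pos p _) ?_⟩
    intro x hx
    simp only [mem_setOf_eq] at hx
    have h1 : edist p x ≤ ENNReal.ofReal a := le_chainDist.trans hx
    rw [Metric.mem_closedBall, dist_comm, ← ENNReal.ofReal_le_ofReal_iff ha.le, ← edist_dist]
    exact h1
  set S : Set ℝ := {r | 0 ≤ r ∧ P r} with hSdef
  obtain ⟨a, hapos, haP⟩ := hbase
  have hSne : S.Nonempty := ⟨a, hapos.le, haP⟩
  by_cases hbdd : BddAbove S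
  · exfalso
    set R0 := sSup S with hR0
    have hseq : ∀ k : ℕ, ∃ r, r ∈ S ∧ R0 - 1/(k+1) < r := by
      intro k
      obtain ⟨r, hrS, hr⟩ := exists_lt_of_lt_csSup hSne
        (show R0 - 1/(k+1) < R0 by
          have : (0:ℝ) < 1/(k+1) := by positivity
          linarith)
      exact ⟨r, hrS, hr⟩
    choose r hrS hrlt using hseq
    have hrR0 : ∀ k, r k ≤ R0 := fun k => le_csSup hbdd (hrS k)
    have hr0 : ∀ k, 0 ≤ r k := fun k => (hrS k).1
    choose ε0 hε0pos hε0top hε0comp using fun k => (hrS k).2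
    set ε : ℕ → ℝ≥0∞ :=
      fun k => (Finset.range (k+1)).inf (fun i => min (ε0 i) (ENNReal.ofReal (1/(i+1)))) with hεdef
    have hεanti : ∀ j k, j ≤ k → ε k ≤ ε j := by
      intro j k hjk
      exact Finset.inf_mono (Finset.range_subset_range.2 (by omega))
    have hεle : ∀ k, ε k ≤ min (ε0 k) (ENNReal.ofReal (1/(k+1))) :=
      fun k => Finset.inf_le (Finset.self_mem_range_succ k)
    have hεofReal : ∀ k, ε k ≤ ENNReal.ofReal (1/(k+1)) :=
      fun k => (hεle k).trans (min_le_right _ _)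
    have hεpos : ∀ k, 0 < ε k := by
      intro k
      rw [hεdef]
      rw [Finset.lt_inf_iff (by simp : (0:ℝ≥0∞) < ⊤)]
      intro i _
      exact lt_min (hε0pos i) (ENNReal.ofReal_pos.2 (by positivity))
    have hεtop : ∀ k, ε k ≠ ⊤ :=
      fun k => (((hεofReal k).trans_lt ENNReal.ofReal_lt_top)).ne
    set C : ℕ → Set X := fun k => {x : X | chainDist (ε k) p x ≤ ENNReal.ofReal (r k)} with hCdef
    have hC : ∀ k, IsCompact (C k) := by
      intro k
      exact hshrink (r k) (ε0 k) (ε k) (hεpos k) ((hεle k).trans (min_le_left _ _)) (hε0comp k)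
    -- the tail estimate
    have htail : ∀ (j k : ℕ), j ≤ k → ∀ x ∈ C k, ∃ y ∈ C j,
        dist x y ≤ (r k - r j) + 1/(k+1) + 1/(k+1) := by
      intro j k hjk x hx
      have hx' : chainDist (ε k) p x
          < ENNReal.ofReal (r k) + ENNReal.ofReal (1/(k+1)) := by
        refine lt_of_le_of_lt hx ?_
        exact ENNReal.lt_add_right (by simp) (ENNReal.ofReal_pos.2 (by positivity)).ne'
      obtain ⟨m, cc, hcc, hlen⟩ := exists_chain_of_chainDist_lt hx'
      obtain ⟨y, hy1, hy2⟩ := truncation (hεtop k) hcc (ENNReal.ofReal (r j))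
      refine ⟨y, ?_, ?_⟩
      · exact le_trans (chainDist_anti (hεanti j k hjk)) hy1
      · have hbound : edist y x ≤ ENNReal.ofReal ((r k - r j) + 1/(k+1) + 1/(k+1)) := by
          refine hy2.trans ?_
          have h1 : chainLengthOf (fun a b : X => edist a b) cc m + ε k
              ≤ ENNReal.ofReal (r k + 1/(k+1) + 1/(k+1)) := by
            rw [ENNReal.ofReal_add (add_nonneg (hr0 k) (by positivity)) (by positivity),
              ENNReal.ofReal_add (hr0 k) (by positivity)]
            exact add_le_add hlen.le (hεofReal k)
          refine le_trans (tsub_le_tsub_right h1 _) ?_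
          rw [← ENNReal.ofReal_sub _ (hr0 j)]
          refine ENNReal.ofReal_le_ofReal ?_
          ring_nf
          exact le_refl _
        rw [edist_dist] at hbound
        rw [dist_comm y x] at hbound
        have hsign : 0 ≤ (r k - r j) + 1/(k+1:ℝ) + 1/(k+1:ℝ) := by
          have h1 := hrlt k
          have h2 := hrR0 j
          have h3 : (0:ℝ) < 1/(k+1) := by positivity
          linarith
        exact (ENNReal.ofReal_le_ofReal_iff hsign).1 hbound
    set U := ⋃ k, C k with hUdef
    have hUtb : TotallyBounded U := by
      rw [Metric.totallyBounded_iff]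
      intro η hη
      obtain ⟨j, hj⟩ := exists_nat_one_div_lt (show (0:ℝ) < η/8 by linarith)
      have hV : IsCompact (⋃ k ∈ Set.Iio j, C k) :=
        (Set.finite_Iio j).isCompact_biUnion (fun k _ => hC k)
      obtain ⟨t1, ht1fin, ht1cov⟩ := Metric.totallyBounded_iff.1 hV.totallyBounded η hη
      obtain ⟨t2, ht2fin, ht2cov⟩ :=
        Metric.totallyBounded_iff.1 (hC j).totallyBounded (η/2) (by linarith)
      refine ⟨t1 ∪ t2, ht1fin.union ht2fin, ?_⟩
      intro x hx
      rw [mem_iUnion] at hx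
      obtain ⟨k, hk⟩ := hx
      by_cases hkj : k < j
      · have hxV : x ∈ ⋃ k ∈ Set.Iio j, C k := mem_biUnion hkj hk
        have := ht1cov hxV
        rw [mem_iUnion₂] at this
        obtain ⟨c, hc1, hc2⟩ := this
        exact mem_biUnion (mem_union_left _ hc1) hc2
      · have hjk : j ≤ k := not_lt.1 hkj
        obtain ⟨y, hyC, hyd⟩ := htail j k hjk x hk
        have := ht2cov hyC
        rw [mem_iUnion₂] at this
        obtain ⟨c, hc1, hc2⟩ := this
        refine mem_biUnion (mem_union_right _ hc1) ?_
        rw [Metric.mem_ball] at hc2 ⊢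
        have h1 : r k - r j < 1/(j+1:ℝ) := by
          have := hrlt j
          have := hrR0 k
          linarith
        have h2 : 1/(k+1:ℝ) ≤ 1/(j+1:ℝ) := by
          apply one_div_le_one_div_of_le (by positivity)
          have : (j:ℝ) ≤ k := Nat.cast_le.2 hjk
          linarith
        calc dist x c ≤ dist x y + dist y c := dist_triangle _ _ _
        _ < (r k - r j + 1/(k+1) + 1/(k+1)) + η/2 := by
              exact add_lt_add_of_le_of_lt hyd hc2
        _ < η := by linarith
    have hUcl : IsCompact (closure U) :=
      TotallyBounded.isCompact_of_isClosed hUtb.closure isClosed_closure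
    obtain ⟨Lc, δ, hLc, hδ, habs⟩ := exists_compact_absorbing hUcl
    obtain ⟨k, hk⟩ := exists_nat_one_div_lt (show (0:ℝ) < δ/4 by linarith)
    set ε' := min (ε k) (ENNReal.ofReal (δ/4)) with hε'def
    have hε'pos : 0 < ε' := lt_min (hεpos k) (ENNReal.ofReal_pos.2 (by linarith))
    have hε'top : ε' ≠ ⊤ :=
      (((min_le_right _ _).trans_lt ENNReal.ofReal_lt_top)).ne
    have hpush : {x : X | chainDist ε' p x ≤ ENNReal.ofReal (r k + δ/4)} ⊆ Lc := by
      intro x hx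
      simp only [mem_setOf_eq] at hx
      have hx' : chainDist ε' p x
          < ENNReal.ofReal (r k + δ/4) + ENNReal.ofReal (δ/4) := by
        refine lt_of_le_of_lt hx ?_
        exact ENNReal.lt_add_right (by simp) (ENNReal.ofReal_pos.2 (by linarith)).ne'
      obtain ⟨m, cc, hcc, hlen⟩ := exists_chain_of_chainDist_lt hx'
      obtain ⟨y, hy1, hy2⟩ := truncation hε'top hcc (ENNReal.ofReal (r k))
      have hyC : y ∈ C k := le_trans (chainDist_anti (min_le_left _ _)) hy1
      have hyU : y ∈ closure U := subset_closure (mem_iUnion.2 ⟨k, hyC⟩)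
      refine habs x y hyU ?_
      have hbound : edist y x ≤ ENNReal.ofReal (δ/2 + δ/4) := by
        refine hy2.trans ?_
        have h1 : chainLengthOf (fun a b : X => edist a b) cc m + ε'
            ≤ ENNReal.ofReal (r k + δ/4 + δ/4 + δ/4) := by
          have e1 : ENNReal.ofReal (r k + δ/4 + δ/4 + δ/4)
              = (ENNReal.ofReal (r k + δ/4) + ENNReal.ofReal (δ/4)) + ENNReal.ofReal (δ/4) := by
            rw [← ENNReal.ofReal_add (add_nonneg (hr0 k) (by linarith)) (by linarith),
              ← ENNReal.ofReal_add (add_nonneg (add_nonneg (hr0 k) (by linarith)) (by linarith)) (by linarith)]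
          rw [e1]
          exact add_le_add hlen.le (min_le_right _ _)
        refine le_trans (tsub_le_tsub_right h1 _) ?_
        rw [← ENNReal.ofReal_sub _ (hr0 k)]
        refine ENNReal.ofReal_le_ofReal (by linarith)
      rw [edist_dist, dist_comm y x] at hbound
      have hd : dist x y ≤ δ/2 + δ/4 :=
        (ENNReal.ofReal_le_ofReal_iff (by linarith)).1 hbound
      linarith
    have hcompP : P (r k + δ/4) :=
      ⟨ε', hε'pos, hε'top, hLc.of_isClosed_subset (isClosed_chainDist_le hε'pos p _) hpush⟩
    have hmemS : r k + δ/4 ∈ S := ⟨by have := hr0 k; linarith, hcompP⟩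
    have hle := le_csSup hbdd hmemS
    have h2 := hrlt k
    have h3 : 1/(k+1:ℝ) < δ/4 := hk
    linarith
  · -- S not bounded above
    obtain ⟨r, hrS, hr⟩ := not_bddAbove_iff.1 hbdd (max R 0)
    obtain ⟨ε, hε, hεtop, hcomp⟩ := hdown r (max R 0) hr.le hrS.2
    refine ⟨ε, hε, hεtop, hcomp.of_isClosed_subset (isClosed_chainDist_le hε p _) ?_⟩
    intro x hx
    exact le_trans hx (ENNReal.ofReal_le_ofReal (le_max_left _ _))
end Compactness

section Geodesic
variable [MetricSpace X]

lemma exists_geodesic [CompleteSpace X] [LocallyCompactSpace X] (p q : X)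
    (hD : chainMetric p q ≠ ⊤) :
    ∃ γ : ℝ → X, γ 0 = p ∧ γ 1 = q ∧
      ∀ s ∈ Icc (0:ℝ) 1, ∀ t ∈ Icc (0:ℝ) 1,
        edist (γ s) (γ t) ≤ chainMetric p q * ENNReal.ofReal |s - t| := by
  classical
  set D := chainMetric p q with hDdef
  obtain ⟨εs, hεspos, hεstop, hK⟩ := compact_chainDist_ball p (D.toReal + 1)
  set K := {x : X | chainDist εs p x ≤ ENNReal.ofReal (D.toReal + 1)} with hKdef
  have hDRe : ENNReal.ofReal (D.toReal + 1) = D + 1 := by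
    rw [ENNReal.ofReal_add ENNReal.toReal_nonneg zero_le_one, ENNReal.ofReal_toReal hD,
      ENNReal.ofReal_one]
  set ε : ℕ → ℝ≥0∞ := fun n => min εs (ENNReal.ofReal (1/(n+1))) with hεdef
  have hεpos : ∀ n, 0 < ε n := fun n =>
    lt_min hεspos (ENNReal.ofReal_pos.2 (by positivity))
  have hεtop : ∀ n, ε n ≠ ⊤ :=
    fun n => (((min_le_right _ _).trans_lt ENNReal.ofReal_lt_top)).ne
  have hεofReal : ∀ n, ε n ≤ ENNReal.ofReal (1/(n+1)) := fun n => min_le_right _ _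
  have hεεs : ∀ n, ε n ≤ εs := fun n => min_le_left _ _
  have hex : ∀ n : ℕ, ∃ (m : ℕ) (c : ℕ → X), IsChainOf (fun a b : X => edist a b) (ε n) p q c m ∧
      chainLengthOf (fun a b : X => edist a b) c m < D + ENNReal.ofReal (1/(n+1)) := by
    intro n
    refine exists_chain_of_chainDist_lt (lt_of_le_of_lt (chainDist_le_chainMetric (hεpos n)) ?_)
    exact ENNReal.lt_add_right hD (ENNReal.ofReal_pos.2 (by positivity)).ne'
  choose m c hchain hlen using hex
  set ℓ : ℕ → ℕ → ℝ≥0∞ := fun n j => chainLengthOf (fun a b : X => edist a b) (c n) j with hℓdef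
  set Ln : ℕ → ℝ≥0∞ := fun n => ℓ n (m n) with hLndef
  have hone : ∀ n : ℕ, ENNReal.ofReal (1/(n+1:ℝ)) ≤ 1 := by
    intro n
    rw [← ENNReal.ofReal_one]
    refine ENNReal.ofReal_le_ofReal ?_
    rw [div_le_one (by positivity)]
    have : (0:ℝ) ≤ n := Nat.cast_nonneg n
    linarith
  have hLnD : ∀ n, Ln n ≤ D + 1 :=
    fun n => (hlen n).le.trans (add_le_add le_rfl (hone n))
  have hLntop : ∀ n, Ln n ≠ ⊤ :=
    fun n => ((hLnD n).trans_lt (by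
      rw [← hDRe]; exact ENNReal.ofReal_lt_top)).ne
  have hℓle : ∀ n j, j ≤ m n → ℓ n j ≤ Ln n :=
    fun n j hj => chainLength_mono (c n) hj
  have hℓtop : ∀ n j, j ≤ m n → ℓ n j ≠ ⊤ :=
    fun n j hj => ((hℓle n j hj).trans_lt (lt_top_iff_ne_top.2 (hLntop n))).ne
  set proj : ℝ → ℝ := fun t => max 0 (min t 1) with hprojdef
  have hproj0 : ∀ t, 0 ≤ proj t := fun t => le_max_left _ _
  have hproj1 : ∀ t, proj t ≤ 1 := fun t => max_le (by norm_num) (min_le_right _ _)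
  have hprojmono : Monotone proj := fun a b hab =>
    max_le_max le_rfl (min_le_min hab le_rfl)
  have hprojIcc : ∀ t ∈ Icc (0:ℝ) 1, proj t = t := by
    intro t ht
    rw [hprojdef]
    simp only []
    rw [min_eq_left ht.2, max_eq_right ht.1]
  set Pd : ℕ → ℝ → ℕ → Prop :=
    fun n t j => ℓ n j ≤ ENNReal.ofReal (proj t) * Ln n with hPddef
  set J : ℕ → ℝ → ℕ := fun n t => Nat.findGreatest (Pd n t) (m n) with hJdef
  set f : ℕ → ℝ → X := fun n t => c n (J n t) with hfdef
  have hPd0 : ∀ n t, Pd n t 0 := by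
    intro n t
    rw [hPddef]
    simp only [hℓdef]
    rw [chainLength_zero]
    exact zero_le
  have hJle : ∀ n t, J n t ≤ m n := fun n t => Nat.findGreatest_le _
  have hJspec : ∀ n t, Pd n t (J n t) :=
    fun n t => Nat.findGreatest_spec (Nat.zero_le _) (hPd0 n t)
  have hkey : ∀ n t, ENNReal.ofReal (proj t) * Ln n ≤ ℓ n (J n t) + ε n := by
    intro n t
    rcases eq_or_lt_of_le (hJle n t) with heq | hlt
    · have h1 : ENNReal.ofReal (proj t) * Ln n ≤ Ln n := by
        calc ENNReal.ofReal (proj t) * Ln n ≤ 1 * Ln n :=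
              mul_le_mul_left (by
                rw [← ENNReal.ofReal_one]
                exact ENNReal.ofReal_le_ofReal (hproj1 t)) _
        _ = Ln n := one_mul _
      rw [heq]
      exact h1.trans le_self_add
    · have hnot : ¬ Pd n t (J n t + 1) :=
        Nat.findGreatest_is_greatest (Nat.lt_succ_self _) hlt
      have hstep : ℓ n (J n t + 1) ≤ ℓ n (J n t) + ε n := by
        rw [hℓdef]
        simp only [chainLengthOf, Finset.sum_range_succ]
        exact add_le_add le_rfl ((hchain n).2.2 _ hlt)
      exact ((not_le.1 hnot).le).trans hstep
  have hmem : ∀ n t, f n t ∈ K := by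
    intro n t
    have h1 : chainDist (ε n) p (f n t) ≤ ℓ n (J n t) :=
      chainDist_le_of_chain (prefix_chain (hchain n) (hJle n t))
    have h2 : ℓ n (J n t) ≤ Ln n := hℓle n _ (hJle n t)
    rw [hKdef, mem_setOf_eq, hDRe]
    exact le_trans (chainDist_anti (hεεs n)) (h1.trans (h2.trans (hLnD n)))
  have hf1 : ∀ n, f n 1 = q := by
    intro n
    have hp1 : proj 1 = 1 := hprojIcc 1 (by norm_num)
    have hPm : Pd n 1 (m n) := by
      rw [hPddef]
      simp only []
      rw [hp1, ENNReal.ofReal_one, one_mul]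
    have : m n ≤ J n 1 := Nat.le_findGreatest le_rfl hPm
    have heq : J n 1 = m n := le_antisymm (hJle n 1) this
    rw [hfdef]
    simp only []
    rw [heq]
    exact (hchain n).2.1
  have hf0 : ∀ n, f n 0 = p := by
    intro n
    have hp0 : proj 0 = 0 := hprojIcc 0 (by norm_num)
    have hz : ℓ n (J n 0) ≤ 0 := by
      have := hJspec n 0
      rw [hPddef] at this
      rwa [hp0, ENNReal.ofReal_zero, zero_mul] at this
    have he : edist (c n 0) (c n (J n 0)) ≤ ℓ n (J n 0) := by
      have h1 := edist_le_sum_Ico (c n) (Nat.zero_le (J n 0))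
      rw [hℓdef]
      simp only [chainLengthOf]
      rw [Finset.range_eq_Ico]
      exact h1
    have : edist (c n 0) (c n (J n 0)) = 0 := le_antisymm (he.trans hz) zero_le
    rw [edist_eq_zero] at this
    rw [hfdef]
    simp only []
    rw [← this, (hchain n).1]
  have hlip : ∀ n s t, s ≤ t →
      edist (f n s) (f n t) ≤ ENNReal.ofReal (proj t - proj s) * Ln n + ε n := by
    intro n s t hst
    have hJmono : J n s ≤ J n t := by
      refine Nat.le_findGreatest (hJle n s) ?_
      refine (hJspec n s).trans ?_
      exact mul_le_mul_left (ENNReal.ofReal_le_ofReal (hprojmono hst)) _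
    have hedist : edist (c n (J n s)) (c n (J n t))
        ≤ ∑ i ∈ Finset.Ico (J n s) (J n t), edist (c n i) (c n (i+1)) :=
      edist_le_sum_Ico (c n) hJmono
    have hsplit : ℓ n (J n s) + ∑ i ∈ Finset.Ico (J n s) (J n t), edist (c n i) (c n (i+1))
        = ℓ n (J n t) := sum_Ico_eq_chainLength_sub (c n) hJmono
    have h2 : ℓ n (J n t) ≤ ℓ n (J n s) + (ENNReal.ofReal (proj t - proj s) * Ln n + ε n) := by
      calc ℓ n (J n t) ≤ ENNReal.ofReal (proj t) * Ln n := hJspec n t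
      _ = (ENNReal.ofReal (proj s) + ENNReal.ofReal (proj t - proj s)) * Ln n := by
            rw [← ENNReal.ofReal_add (hproj0 s) (sub_nonneg.2 (hprojmono hst))]
            congr 2
            ring
      _ = ENNReal.ofReal (proj s) * Ln n + ENNReal.ofReal (proj t - proj s) * Ln n := by
            rw [add_mul]
      _ ≤ (ℓ n (J n s) + ε n) + ENNReal.ofReal (proj t - proj s) * Ln n :=
            add_le_add_left (hkey n s) _
      _ = ℓ n (J n s) + (ENNReal.ofReal (proj t - proj s) * Ln n + ε n) := by
            ring
    have h3 : ℓ n (J n s) + ∑ i ∈ Finset.Ico (J n s) (J n t), edist (c n i) (c n (i+1))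
        ≤ ℓ n (J n s) + (ENNReal.ofReal (proj t - proj s) * Ln n + ε n) := by
      rw [hsplit]
      exact h2
    have h4 := (ENNReal.add_le_add_iff_left (hℓtop n (J n s) (hJle n s))).1 h3
    exact hedist.trans h4
  -- pass to the limit along an ultrafilter
  set U : Ultrafilter ℕ := Ultrafilter.of atTop with hUdef
  have hUle : (U : Filter ℕ) ≤ atTop := Ultrafilter.of_le _
  have hlimex : ∀ t : ℝ, ∃ x ∈ K, (Ultrafilter.map (fun n => f n t) U : Filter X) ≤ nhds x := by
    intro t
    refine (isCompact_iff_ultrafilter_le_nhds.1 hK) (Ultrafilter.map (fun n => f n t) U) ?_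
    rw [Ultrafilter.coe_map]
    refine Filter.le_principal_iff.2 (Filter.mem_map.2 (Filter.univ_mem' (fun n => ?_)))
    exact hmem n t
  choose γ hγK hγlim using hlimex
  have hγtend : ∀ t, Tendsto (fun n => f n t) (U : Filter ℕ) (nhds (γ t)) := by
    intro t
    have := hγlim t
    rwa [Ultrafilter.coe_map] at this
  refine ⟨γ, ?_, ?_, ?_⟩
  · refine tendsto_nhds_unique (hγtend 0) ?_
    have : (fun n => f n 0) = fun _ => p := funext hf0
    rw [this]
    exact tendsto_const_nhds
  · refine tendsto_nhds_unique (hγtend 1) ?_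
    have : (fun n => f n 1) = fun _ => q := funext hf1
    rw [this]
    exact tendsto_const_nhds
  · have key : ∀ s ∈ Icc (0:ℝ) 1, ∀ t ∈ Icc (0:ℝ) 1, s ≤ t →
        edist (γ s) (γ t) ≤ D * ENNReal.ofReal (t - s) := by
      intro s hs t ht hst
      have h1 : Tendsto (fun n => edist (f n s) (f n t)) (U : Filter ℕ)
          (nhds (edist (γ s) (γ t))) := (hγtend s).edist (hγtend t)
      have hofn : Tendsto (fun n : ℕ => ENNReal.ofReal (1/(n+1))) atTop (nhds 0) := by
        have := ENNReal.tendsto_ofReal (tendsto_one_div_add_atTop_nhds_zero_nat)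
        rwa [ENNReal.ofReal_zero] at this
      have h2 : Tendsto (fun n : ℕ => ENNReal.ofReal (t - s) * (D + ENNReal.ofReal (1/(n+1)))
          + ENNReal.ofReal (1/(n+1))) atTop (nhds (ENNReal.ofReal (t - s) * D)) := by
        have ha : Tendsto (fun n : ℕ => D + ENNReal.ofReal (1/(n+1))) atTop (nhds D) := by
          have := Tendsto.add (tendsto_const_nhds (x := D) (f := atTop)) hofn
          simpa using this
        have hb := ENNReal.Tendsto.const_mul (a := ENNReal.ofReal (t - s)) ha (Or.inr ENNReal.ofReal_ne_top)
        have hc := Tendsto.add hb hofn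
        simpa using hc
      have hbound : ∀ n, edist (f n s) (f n t)
          ≤ ENNReal.ofReal (t - s) * (D + ENNReal.ofReal (1/(n+1))) + ENNReal.ofReal (1/(n+1)) := by
        intro n
        refine (hlip n s t hst).trans ?_
        rw [hprojIcc s hs, hprojIcc t ht]
        refine add_le_add ?_ (hεofReal n)
        exact mul_le_mul_right (hlen n).le _
      rw [mul_comm]
      exact le_of_tendsto_of_tendsto' h1 (h2.mono_left hUle) hbound
    intro s hs t ht
    rcases le_total s t with hst | hts
    · rw [abs_sub_comm, abs_of_nonneg (sub_nonneg.2 hst)]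
      exact key s hs t ht hst
    · rw [abs_of_nonneg (sub_nonneg.2 hts), edist_comm]
      exact key t ht s hs hts
end Geodesic

section Final
variable [MetricSpace X] {p q : X}

lemma geodesic_aux {γ : ℝ → X} (hD : chainMetric p q ≠ ⊤)
    (h0 : γ 0 = p) (h1 : γ 1 = q)
    (hlip : ∀ s ∈ Icc (0:ℝ) 1, ∀ t ∈ Icc (0:ℝ) 1,
      edist (γ s) (γ t) ≤ chainMetric p q * ENNReal.ofReal |s - t|) :
    ContinuousWrt (fun a b : X => edist a b) γ ∧
      pathLengthOf (fun a b : X => edist a b) γ = chainMetric p q := by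
  set D := chainMetric p q with hDdef
  have hcw : ContinuousWrt (fun a b : X => edist a b) γ := by
    intro t ht
    have hupper : Tendsto (fun s => D * ENNReal.ofReal |s - t|)
        (nhdsWithin t (Icc (0:ℝ) 1)) (nhds 0) := by
      have habs : Tendsto (fun s : ℝ => |s - t|) (nhdsWithin t (Icc (0:ℝ) 1)) (nhds 0) := by
        have hcont : Continuous (fun s : ℝ => |s - t|) :=
          continuous_abs.comp (continuous_id.sub continuous_const)
        have := hcont.tendsto t
        simp only [sub_self, abs_zero] at this
        exact this.mono_left nhdsWithin_le_nhds
      have hof := ENNReal.tendsto_ofReal habs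
      rw [ENNReal.ofReal_zero] at hof
      have := ENNReal.Tendsto.const_mul (a := D) hof (Or.inr hD)
      rwa [mul_zero] at this
    refine tendsto_of_tendsto_of_tendsto_of_le_of_le' tendsto_const_nhds hupper ?_ ?_
    · exact Filter.Eventually.of_forall (fun s => zero_le)
    · filter_upwards [self_mem_nhdsWithin] with s hs
      exact hlip s hs t ht
  refine ⟨hcw, le_antisymm ?_ (chainMetric_le_pathLength hcw h0 h1)⟩
  rw [pathLengthOf]
  refine iSup_le fun n => iSup_le fun t => iSup_le fun htc => ?_
  obtain ⟨ht0, htn, hmono⟩ := htc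
  have hmem : ∀ k ≤ n, t k ∈ Icc (0:ℝ) 1 := by
    intro k hk
    exact ⟨ht0 ▸ hmono (Nat.zero_le k), htn ▸ hmono hk⟩
  calc ∑ k ∈ Finset.range n, edist (γ (t k)) (γ (t (k + 1)))
      ≤ ∑ k ∈ Finset.range n, D * ENNReal.ofReal (t (k+1) - t k) := by
        refine Finset.sum_le_sum fun k hk => ?_
        rw [Finset.mem_range] at hk
        have := hlip (t k) (hmem k hk.le) (t (k+1)) (hmem (k+1) hk)
        rwa [abs_sub_comm, abs_of_nonneg (sub_nonneg.2 (hmono (Nat.le_succ k)))] at this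
  _ = D * ∑ k ∈ Finset.range n, ENNReal.ofReal (t (k+1) - t k) := by
        rw [Finset.mul_sum]
  _ = D * ENNReal.ofReal (∑ k ∈ Finset.range n, (t (k+1) - t k)) := by
        rw [ENNReal.ofReal_sum_of_nonneg]
        intro k hk
        exact sub_nonneg.2 (hmono (Nat.le_succ k))
  _ = D := by
        rw [Finset.sum_range_sub, ht0, htn]
        norm_num

theorem chainMetric_eq_lengthMetric_of_complete_locallyCompact' [CompleteSpace X]
    [LocallyCompactSpace X] :
    (∀ p q : X, chainMetric p q = lengthMetric p q) ∧
    ∀ p q : X, chainMetric p q ≠ ⊤ →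
      ∃ γ : ℝ → X, γ 0 = p ∧ γ 1 = q ∧ ContinuousOn γ (Icc (0 : ℝ) 1) ∧
        (∀ t ∈ Icc (0 : ℝ) 1, ∀ t' ∈ Icc (0 : ℝ) 1,
          edist (γ t) (γ t') ≤ chainMetric p q * ENNReal.ofReal |t - t'|) ∧
        pathLength γ = chainMetric p q := by
  constructor
  · intro p q
    refine le_antisymm chainMetric_le_lengthMetric ?_
    rcases eq_or_ne (chainMetric p q) ⊤ with h | h
    · rw [h]; exact le_top
    · obtain ⟨γ, h0, h1, hlip⟩ := exists_geodesic p q h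
      obtain ⟨hcw, hlen⟩ := geodesic_aux h h0 h1 hlip
      calc lengthMetric p q ≤ pathLengthOf (fun a b : X => edist a b) γ := by
            rw [lengthMetric, lengthMetricOf]
            exact iInf_le_of_le γ (iInf_le_of_le ⟨hcw, h0, h1⟩ le_rfl)
      _ = chainMetric p q := hlen
  · intro p q h
    obtain ⟨γ, h0, h1, hlip⟩ := exists_geodesic p q h
    obtain ⟨hcw, hlen⟩ := geodesic_aux h h0 h1 hlip
    exact ⟨γ, h0, h1, continuousOn_of_continuousWrt hcw, hlip, hlen⟩
end Final

/-- if `(X,d)` is complete and locally compact, then `d_0 = d̄`; moreover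
`(X,d_0)` is a geodesic space: for all `p, q` with `d_0(p,q) < ∞` there is a path `γ`
from `p` to `q` with `d(γ t, γ t') ≤ d_0(p,q)·|t − t'|` and `L(γ) = d_0(p,q)`. -/
theorem chainMetric_eq_lengthMetric_of_complete_locallyCompact {X : Type*} [MetricSpace X]
    [CompleteSpace X] [LocallyCompactSpace X] :
    (∀ p q : X, chainMetric p q = lengthMetric p q) ∧
    ∀ p q : X, chainMetric p q ≠ ⊤ →
      ∃ γ : ℝ → X, γ 0 = p ∧ γ 1 = q ∧ ContinuousOn γ (Icc (0 : ℝ) 1) ∧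
        (∀ t ∈ Icc (0 : ℝ) 1, ∀ t' ∈ Icc (0 : ℝ) 1,
          edist (γ t) (γ t') ≤ chainMetric p q * ENNReal.ofReal |t - t'|) ∧
        pathLength γ = chainMetric p q := by
  exact chainMetric_eq_lengthMetric_of_complete_locallyCompact'
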